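/- Let n ≥ 2 and let G be an irreducible n×n row-stochastic matrix. For α ∈ ℝ^n with 0 ≤ αᵢ ≤ 1 for all i, the matrix G(α) := (I − D(α))G + D(α) is irreducible if and only if αᵢ < 1 for every i. -/
import Mathlib


open Matrix BigOperators

/-- A square matrix `G` is irreducible if there exist no nonempty disjoint sets
`I, J` with `I ∪ J = {1,…,n}` such that `G i j = 0` for all `i ∈ I`, `j ∈ J`. -/
def MatIrreducible {n : ℕ} (G : Matrix (Fin n) (Fin n) ℝ) : Prop :=
  ¬ ∃ I J : Set (Fin n), I.Nonempty ∧ J.Nonempty ∧ Disjoint I J ∧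
      I ∪ J = Set.univ ∧ ∀ i ∈ I, ∀ j ∈ J, G i j = 0

/-- For `n ≥ 2`, an irreducible row-stochastic `G` and `α ∈ [0,1]^n`,
the matrix `G(α) = (I − D(α))G + D(α)` is irreducible iff `α i < 1` for all `i`. -/
theorem stmt1 {n : ℕ} (hn : 2 ≤ n) (G : Matrix (Fin n) (Fin n) ℝ)
    (hGnonneg : ∀ i j, 0 ≤ G i j) (hGrow : ∀ i, ∑ j, G i j = 1)
    (hGirr : MatIrreducible G)
    (α : Fin n → ℝ) (hα0 : ∀ i, 0 ≤ α i) (hα1 : ∀ i, α i ≤ 1) :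
    MatIrreducible ((1 - Matrix.diagonal α) * G + Matrix.diagonal α) ↔
      ∀ i, α i < 1 := by
  have key : ∀ i j, ((1 - Matrix.diagonal α) * G + Matrix.diagonal α) i j
      = (1 - α i) * G i j + (if i = j then α i else 0) := by
    intro i j
    simp [Matrix.sub_mul, Matrix.sub_apply, Matrix.add_apply, Matrix.diagonal_mul,
      Matrix.diagonal_apply, sub_mul]
  haveI : Nontrivial (Fin n) := Fin.nontrivial_iff_two_le.mpr hn
  constructor
  · intro hirr i
    by_contra h
    have hαi : α i = 1 := le_antisymm (hα1 i) (not_lt.mp h)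
    apply hirr
    obtain ⟨j, hj⟩ := exists_ne i
    refine ⟨{i}, {i}ᶜ, ⟨i, rfl⟩, ⟨j, hj⟩, disjoint_compl_right,
      Set.union_compl_self _, ?_⟩
    intro a ha b hb
    rcases ha with rfl
    have hab : a ≠ b := fun e => hb (e ▸ rfl)
    rw [key, hαi]
    simp [hab]
  · rintro hlt ⟨I, J, hI, hJ, hdis, hun, hzero⟩
    apply hGirr
    refine ⟨I, J, hI, hJ, hdis, hun, ?_⟩
    intro i hi j hj
    have hij : i ≠ j := fun e => Set.disjoint_left.mp hdis hi (e ▸ hj)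
    have hz := hzero i hi j hj
    rw [key] at hz
    simp only [hij, if_false, add_zero] at hz
    have hpos : 0 < 1 - α i := by linarith [hlt i]
    exact (mul_eq_zero.mp hz).resolve_left (ne_of_gt hpos)
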